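/- For every integer n ≥ 1, the polynomials Q₀(W,Z), Q₁(W,Z), …, Q_n(W,Z) are algebraically independent over ℂ in the polynomial ring ℂ[W,Z] in the 2n² entries of W and Z. -/

import Mathlib

open Polynomial Matrix Finset

/-- Companion-style pencil matrix whose determinant is `∑ c a * λ^a`. -/
noncomputable def compMat {R : Type*} [CommRing R] (n : ℕ) (c : ℕ → R) :
    Matrix (Fin n) (Fin n) (Polynomial R) :=
  Matrix.of fun s t =>
    if (s : ℕ) + 1 = n then
      (if (t : ℕ) + 1 = n then Polynomial.C (c t) + Polynomial.X * Polynomial.C (c n)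
       else Polynomial.C (c t))
    else if (t : ℕ) = (s : ℕ) then Polynomial.X
    else if (t : ℕ) = (s : ℕ) + 1 then -1 else 0

lemma det_compMat {R : Type*} [CommRing R] : ∀ (n : ℕ) (c : ℕ → R),
    (compMat (n + 1) c).det
      = ∑ a ∈ Finset.range (n + 2), Polynomial.C (c a) * Polynomial.X ^ a := by
  intro n
  induction n with
  | zero =>
    intro c
    rw [Matrix.det_fin_one]
    simp only [compMat, Matrix.of_apply, Fin.val_zero, Finset.sum_range_succ,
      Finset.sum_range_zero]
    norm_num
  | succ m ih =>
    intro c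
    set M := compMat (m + 1 + 1) c with hM
    have key := Matrix.det_succ_column_zero M
    rw [key]
    have hzero : ∀ i ∈ (Finset.univ : Finset (Fin (m + 2))),
        i ∉ ({0, Fin.last (m + 1)} : Finset (Fin (m + 2))) →
        (-1 : Polynomial R) ^ (i : ℕ) * M i 0 * (M.submatrix i.succAbove Fin.succ).det = 0 := by
      intro i _ hi
      simp only [Finset.mem_insert, Finset.mem_singleton, not_or] at hi
      have h1 : (i : ℕ) ≠ 0 := fun h => hi.1 (Fin.ext h)
      have h2 : (i : ℕ) ≠ m + 1 := fun h => hi.2 (Fin.ext h)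
      have : M i 0 = 0 := by
        simp only [hM, compMat, Matrix.of_apply, Fin.val_zero]
        have c1 : ¬ ((i : ℕ) + 1 = m + 1 + 1) := by omega
        have c2 : ¬ ((0 : ℕ) = (i : ℕ)) := by omega
        have c3 : ¬ ((0 : ℕ) = (i : ℕ) + 1) := by omega
        simp [c1, c2, c3, h2]
      rw [this]; ring
    rw [← Finset.sum_subset (Finset.subset_univ ({0, Fin.last (m + 1)} : Finset (Fin (m + 2))))
        hzero]
    rw [Finset.sum_pair (by simp [Fin.ext_iff] : (0 : Fin (m + 2)) ≠ Fin.last (m + 1))]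
    -- entry values
    have e0 : M 0 0 = Polynomial.X := by
      simp [hM, compMat]
    have el : M (Fin.last (m + 1)) 0 = Polynomial.C (c 0) := by
      simp [hM, compMat, Fin.last]
    -- first minor
    have m0 : M.submatrix (Fin.succAbove 0) Fin.succ = compMat (m + 1) (fun k => c (k + 1)) := by
      ext i j
      simp only [hM, compMat, Matrix.submatrix_apply, Fin.succAbove_zero, Matrix.of_apply,
        Fin.val_succ]
      have h1 : ((i : ℕ) + 1 + 1 = m + 1 + 1) ↔ ((i : ℕ) + 1 = m + 1) := by omega
      have h2 : ((j : ℕ) + 1 + 1 = m + 1 + 1) ↔ ((j : ℕ) + 1 = m + 1) := by omega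
      have h3 : ((j : ℕ) + 1 = (i : ℕ) + 1) ↔ ((j : ℕ) = (i : ℕ)) := by omega
      have h4 : ((j : ℕ) + 1 = (i : ℕ) + 1 + 1) ↔ ((j : ℕ) = (i : ℕ) + 1) := by omega
      simp only [h1, h2, h3, h4]
    -- last minor is lower triangular with diagonal -1
    have ml : (M.submatrix (Fin.last (m + 1)).succAbove Fin.succ).det = (-1) ^ (m + 1) := by
      have htri : (M.submatrix (Fin.last (m + 1)).succAbove Fin.succ).BlockTriangular
          OrderDual.toDual := by
        intro i j hij
        have hij' : (i : ℕ) < (j : ℕ) := hij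
        simp only [hM, compMat, Matrix.submatrix_apply, Fin.succAbove_last, Matrix.of_apply,
          Fin.coe_castSucc, Fin.val_succ]
        have c1 : ¬ ((i : ℕ) + 1 = m + 1 + 1) := by omega
        have c2 : ¬ ((j : ℕ) + 1 = (i : ℕ)) := by omega
        have c3 : ¬ ((j : ℕ) + 1 = (i : ℕ) + 1) := by omega
        simp [c1, c2, c3, show ¬ ((i : ℕ) = m + 1) by omega, show ¬ ((j : ℕ) = (i : ℕ)) by omega]
      rw [Matrix.det_of_lowerTriangular _ htri]
      have hdiag : ∀ i : Fin (m + 1), M i.castSucc i.succ = -1 := by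
        intro i
        simp only [hM, compMat, Matrix.submatrix_apply, Fin.succAbove_last, Matrix.of_apply,
          Fin.coe_castSucc, Fin.val_succ]
        have c1 : ¬ ((i : ℕ) + 1 = m + 1 + 1) := by omega
        have c2 : ¬ ((i : ℕ) + 1 = (i : ℕ)) := by omega
        have c3 : ((i : ℕ) + 1 = (i : ℕ) + 1) := rfl
        simp [c1, c2, c3, show ¬ ((i : ℕ) = m + 1) by omega]
      simp only [Matrix.submatrix_apply, Fin.succAbove_last, hdiag]
      simp
    rw [e0, el, m0, ml, ih]
    simp only [Fin.val_zero, pow_zero, one_mul, Fin.val_last]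
    rw [Finset.sum_range_succ' (fun a => Polynomial.C (c a) * Polynomial.X ^ a) (m + 2),
      Finset.mul_sum]
    congr 1
    · exact Finset.sum_congr rfl fun a _ => by ring
    · have h2 : ((-1 : Polynomial R)) ^ (m + 1) * (-1) ^ (m + 1) = 1 := by
        rw [← pow_add]
        exact Even.neg_one_pow ⟨m + 1, by ring⟩
      calc (-1 : Polynomial R) ^ (m + 1) * Polynomial.C (c 0) * (-1) ^ (m + 1)
          = ((-1) ^ (m + 1) * (-1) ^ (m + 1)) * Polynomial.C (c 0) := by ring
        _ = Polynomial.C (c 0) * Polynomial.X ^ 0 := by rw [h2, one_mul, pow_zero, mul_one]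

/-- The polynomial `Q_a(W,Z)` defined by `det(W + λ Z) = Σ_a Q_a(W,Z) λ^a`, as a
multivariate polynomial over ℂ in the entries of two `n × n` matrix variables `W`
(indexed by `Sum.inl`) and `Z` (indexed by `Sum.inr`). -/
noncomputable def Qpoly (n a : ℕ) : MvPolynomial ((Fin n × Fin n) ⊕ (Fin n × Fin n)) ℂ :=
  Polynomial.coeff
    (Matrix.det (Matrix.of fun s t : Fin n =>
      Polynomial.C (MvPolynomial.X (Sum.inl (s, t))) +
        Polynomial.X * Polynomial.C (MvPolynomial.X (Sum.inr (s, t))))) a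

/-- For every `n ≥ 1`, the polynomials `Q₀, Q₁, …, Q_n` are algebraically independent
over ℂ in the polynomial ring `ℂ[W, Z]`. -/
theorem stmt8 (n : ℕ) (hn : 1 ≤ n) :
    AlgebraicIndependent ℂ (fun a : Fin (n + 1) => Qpoly n (a : ℕ)) := by
  classical
  obtain ⟨m, rfl⟩ : ∃ m, n = m + 1 := ⟨n - 1, by omega⟩
  -- target ring of the specialization: `ℂ[x₀, …, x_{m+1}]`
  set c : ℕ → MvPolynomial (Fin (m + 2)) ℂ := fun k =>
    if h : k < m + 2 then MvPolynomial.X (⟨k, h⟩ : Fin (m + 2)) else 0 with hc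
  set v : (Fin (m + 1) × Fin (m + 1)) ⊕ (Fin (m + 1) × Fin (m + 1)) →
      MvPolynomial (Fin (m + 2)) ℂ := fun p =>
    match p with
    | Sum.inl (s, t) =>
        if (s : ℕ) + 1 = m + 1 then c t
        else if (t : ℕ) = (s : ℕ) then 0
        else if (t : ℕ) = (s : ℕ) + 1 then -1 else 0
    | Sum.inr (s, t) =>
        if (s : ℕ) + 1 = m + 1 then (if (t : ℕ) + 1 = m + 1 then c (m + 1) else 0)
        else if (t : ℕ) = (s : ℕ) then 1 else 0
    with hv
  apply AlgebraicIndependent.of_comp (MvPolynomial.aeval v)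
  have key : (MvPolynomial.aeval v) ∘ (fun a : Fin (m + 1 + 1) => Qpoly (m + 1) (a : ℕ))
      = fun a : Fin (m + 1 + 1) => MvPolynomial.X a := by
    funext a
    simp only [Function.comp_apply]
    set P : Matrix (Fin (m + 1)) (Fin (m + 1)) (Polynomial (MvPolynomial ((Fin (m + 1) × Fin (m + 1)) ⊕ (Fin (m + 1) × Fin (m + 1))) ℂ)) :=
      Matrix.of fun s t : Fin (m + 1) =>
        Polynomial.C (MvPolynomial.X (Sum.inl (s, t))) +
          Polynomial.X * Polynomial.C (MvPolynomial.X (Sum.inr (s, t))) with hP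
    have h0 : ∀ p : Polynomial (MvPolynomial ((Fin (m + 1) × Fin (m + 1)) ⊕ (Fin (m + 1) × Fin (m + 1))) ℂ),
        (MvPolynomial.aeval v) (p.coeff (a : ℕ))
          = (p.map (MvPolynomial.aeval v).toRingHom).coeff (a : ℕ) :=
      fun p => (Polynomial.coeff_map _ _).symm
    show (MvPolynomial.aeval v) (P.det.coeff (a : ℕ)) = MvPolynomial.X a
    rw [h0, ← Polynomial.coe_mapRingHom, RingHom.map_det]
    have hmat : P.map
          (Polynomial.mapRingHom (MvPolynomial.aeval v).toRingHom) = compMat (m + 1) c := by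
      refine Matrix.ext fun s t => ?_
      simp only [hP, Matrix.map_apply, Matrix.of_apply, Polynomial.coe_mapRingHom,
        Polynomial.map_add,
        Polynomial.map_mul, Polynomial.map_C, Polynomial.map_X, AlgHom.coe_toRingHom,
        MvPolynomial.aeval_X, compMat]
      by_cases h1 : (s : ℕ) + 1 = m + 1
      · have h1' : (s : ℕ) = m := by omega
        by_cases h2 : (t : ℕ) + 1 = m + 1
        · have h2' : (t : ℕ) = m := by omega
          simp [hv, h1, h2, h1', h2']
        · have h2' : (t : ℕ) ≠ m := by omega
          simp [hv, h1, h2, h1', h2']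
      · have h1' : (s : ℕ) ≠ m := by omega
        by_cases h2 : (t : ℕ) = (s : ℕ)
        · simp [hv, h1, h2, h1']
        · by_cases h3 : (t : ℕ) = (s : ℕ) + 1
          · simp [hv, h1, h2, h3, h1']
          · simp [hv, h1, h2, h3, h1']
    rw [RingHom.mapMatrix_apply, hmat, det_compMat m c, Polynomial.finset_sum_coeff]
    simp only [Polynomial.coeff_C_mul, Polynomial.coeff_X_pow, mul_ite, mul_one, mul_zero]
    rw [Finset.sum_ite_eq (Finset.range (m + 2)) (a : ℕ) c]
    rw [if_pos (Finset.mem_range.mpr a.isLt)]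
    simp [hc, a.isLt]
  rw [key]
  exact MvPolynomial.algebraicIndependent_X _ _
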